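/- Let G be a group acting on a type E, and let p : E → B be a function satisfying p (g • e) = p e for all g : G, e : E. Assume the shear map is bijective. Then there is an isomorphism of simplicial sets between the nerve of the action groupoid of G on E (Mathlib: the nerve of CategoryTheory.ActionCategory G E) and the Čech nerve of p, which in simplicial degree n identifies a string of n composable morphisms in the action groupoid, determined by a base point e : E and group elements g₁, …, g_n : G, with the tuple ((g₁g₂⋯g_n) • e, (g₂⋯g_n) • e, …, g_n • e, e) ∈ Č_n(p). (Simplicial form of the equivalence B^•_{G}(∗, E) ≅ Č^•(E → B) of Lemma 'Action'/Proposition 'King of Kings' in the topos of sets.) -/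

import Mathlib

/-!
STATEMENT 5: Let `G` act on `E`, `p : E → B` be `G`-invariant with bijective shear map.
Then the nerve of the action groupoid of `G` on `E` is isomorphic, as a simplicial set,
to the Čech nerve of `p`; in degree `n` the isomorphism sends a string of `n` composable
morphisms in the action groupoid (determined by a base point `e` and group elements
`g₁, …, g_n`, with vertices `(g₁⋯g_n) • e, (g₂⋯g_n) • e, …, g_n • e, e`) to the tuple of
the underlying points of its vertices.
-/

open CategoryTheory

/-- The shear map `G × E → E ×_B E`, `(g, e) ↦ (g • e, e)`. -/
def shearMap {G E B : Type*} [Group G] [MulAction G E] (p : E → B)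
    (hp : ∀ (g : G) (e : E), p (g • e) = p e) :
    G × E → {z : E × E // p z.1 = p z.2} :=
  fun ge => ⟨(ge.1 • ge.2, ge.2), hp ge.1 ge.2⟩

/-- The Čech nerve of a function `p : E → B`, as a simplicial set: its `n`-simplices are
functions `f : Fin (n+1) → E` with `p ∘ f` constant, and the simplicial operators are given
by precomposition with the monotone maps of `SimplexCategory`. -/
def cechSSet {E : Type u} {B : Type v} (p : E → B) : SSet.{u} where
  obj m := {f : Fin (m.unop.len + 1) → E // ∀ i j, p (f i) = p (f j)}
  map φ := TypeCat.ofHom fun f => ⟨fun i => f.1 (φ.unop.toOrderHom i), fun i j => f.2 _ _⟩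

theorem nerve_actionCategory_iso_cechNerve {G E : Type u} {B : Type v}
    [Group G] [MulAction G E] (p : E → B)
    (hp : ∀ (g : G) (e : E), p (g • e) = p e)
    (hshear : Function.Bijective (shearMap p hp)) :
    ∃ Φ : nerve (ActionCategory G E) ≅ cechSSet p,
      ∀ (m : SimplexCategoryᵒᵖ) (σ : ComposableArrows (ActionCategory G E) m.unop.len)
        (i : Fin (m.unop.len + 1)),
        (Φ.hom.app m σ :
            {f : Fin (m.unop.len + 1) → E // ∀ i j, p (f i) = p (f j)}).1 i =
          (σ.obj i).back := by
  -- uniqueness of morphisms between fixed objects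
  have hsub : ∀ (x y : ActionCategory G E) (f g : x ⟶ y), f = g := by
    intro x y f g
    have hf : f.1 • x.back = y.back := f.2
    have hg : g.1 • x.back = y.back := g.2
    have : shearMap p hp (f.1, x.back) = shearMap p hp (g.1, x.back) := by
      apply Subtype.ext
      simp [shearMap, hf, hg]
    have := hshear.1 this
    exact Subtype.ext (congrArg Prod.fst this)
  -- p-invariance along a morphism
  have hmor : ∀ (x y : ActionCategory G E) (f : x ⟶ y), p y.back = p x.back := by
    intro x y f
    have hf : f.1 • x.back = y.back := f.2
    rw [← hf, hp]
  have hconst : ∀ (n : ℕ) (σ : ComposableArrows (ActionCategory G E) n) (i j : Fin (n + 1)),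
      p (σ.obj i).back = p (σ.obj j).back := by
    intro n σ
    have key : ∀ i j : Fin (n + 1), i ≤ j → p (σ.obj j).back = p (σ.obj i).back :=
      fun i j hij => hmor _ _ (σ.map (homOfLE hij))
    intro i j
    rcases le_total i j with h | h
    · exact (key i j h).symm
    · exact key j i h
  let hom : nerve (ActionCategory G E) ⟶ cechSSet p := {
    app := fun m => TypeCat.ofHom fun σ => ⟨fun i => (σ.obj i).back, hconst _ σ⟩
    naturality := fun m m' φ => by
      ext σ
      rfl }
  have hbij : ∀ m, Function.Bijective (hom.app m) := by
    intro m
    constructor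
    · intro σ τ h
      have hobj : ∀ i, σ.obj i = τ.obj i := by
        intro i
        have : (σ.obj i).back = (τ.obj i).back := congrFun (congrArg Subtype.val h) i
        rw [← ActionCategory.back_coe (σ.obj i), ← ActionCategory.back_coe (τ.obj i), this]
      refine ComposableArrows.ext hobj ?_
      intro i hi
      apply hsub
    · rintro ⟨f, hf⟩
      -- choose group elements via surjectivity of the shear map
      have hch : ∀ i : Fin m.unop.len, ∃ g : G, g • f i.castSucc = f i.succ := by
        intro i
        obtain ⟨⟨g, e⟩, hge⟩ := hshear.2 ⟨(f i.succ, f i.castSucc), hf _ _⟩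
        have h1 : g • e = f i.succ := congrArg (Prod.fst ∘ Subtype.val) hge
        have h2 : e = f i.castSucc := congrArg (Prod.snd ∘ Subtype.val) hge
        exact ⟨g, by rw [h2] at h1; exact h1⟩
      choose g hg using hch
      refine ⟨ComposableArrows.mkOfObjOfMapSucc (fun i => (f i : ActionCategory G E))
        (fun i => ⟨g i, hg i⟩), ?_⟩
      apply Subtype.ext
      funext i
      rfl
  have : ∀ m, IsIso (hom.app m) := fun m => (isIso_iff_bijective _).2 (hbij m)
  have : IsIso hom := NatIso.isIso_of_isIso_app hom
  exact ⟨asIso hom, fun m σ i => rfl⟩
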